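/- If a simplicial set X is upper 2-Segal, then the square with top s_1 : X_1 → X_2, left d_0 : X_1 → X_0, right d_0 : X_2 → X_1, bottom s_0 : X_0 → X_1 is a pullback of sets. -/

import Mathlib

open CategoryTheory Simplicial

universe u

/-- A commuting square of sets (top `f`, left `g`, right `h`, bottom `k`) is a pullback
if the canonical map to the fiber product is a bijection. -/
def IsPullbackSet {A B C D : Type u} (f : A → B) (g : A → C) (h : B → D) (k : C → D) : Prop :=
  (∀ a, h (f a) = k (g a)) ∧ ∀ (b : B) (c : C), h b = k c → ∃! a : A, f a = b ∧ g a = c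

/-- The upper 2-Segal condition: for every `n ≥ 2` (here `n = m + 2`) and every `0 < i < n`,
the square with top `d_{i+1} : X_{n+1} → X_n`, left `d_0 : X_{n+1} → X_n`,
right `d_0 : X_n → X_{n-1}`, bottom `d_i : X_n → X_{n-1}` is a pullback. -/
def UpperTwoSegal (X : SSet.{u}) : Prop :=
  ∀ (m i : ℕ), 0 < i → ∀ h2 : i < m + 2,
    IsPullbackSet
      (fun x => X.δ (⟨i + 1, by omega⟩ : Fin (m + 4)) x)
      (fun x => X.δ (0 : Fin (m + 4)) x)
      (fun x => X.δ (0 : Fin (m + 3)) x)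
      (fun x => X.δ (⟨i, by omega⟩ : Fin (m + 3)) x)

section Aux
variable (X : SSet.{u})

lemma aux_comm (x : X _⦋1⦌) :
    X.δ (0 : Fin 3) (X.σ (1 : Fin 2) x) = X.σ (0 : Fin 1) (X.δ (0 : Fin 2) x) := by
  have := ConcreteCategory.congr_hom (X.δ_comp_σ_of_le (i := (0 : Fin 2)) (j := (0 : Fin 1)) (by decide)) x
  simpa using this

lemma aux_d2s1 (x : X _⦋1⦌) : X.δ (2 : Fin 3) (X.σ (1 : Fin 2) x) = x := by
  have := ConcreteCategory.congr_hom (X.δ_comp_σ_succ (i := (1 : Fin 2))) x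
  simpa using this

lemma aux_d2s1' (b : X _⦋2⦌) : X.δ (2 : Fin 4) (X.σ (1 : Fin 3) b) = b := by
  have := ConcreteCategory.congr_hom (X.δ_comp_σ_succ (i := (1 : Fin 3))) b
  simpa using this

lemma aux_d2s2 (b : X _⦋2⦌) : X.δ (2 : Fin 4) (X.σ (2 : Fin 3) b) = b := by
  have := ConcreteCategory.congr_hom (X.δ_comp_σ_self (i := (2 : Fin 3))) b
  simpa using this

lemma aux_d0s2 (b : X _⦋2⦌) :
    X.δ (0 : Fin 4) (X.σ (2 : Fin 3) b) = X.σ (1 : Fin 2) (X.δ (0 : Fin 3) b) := by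
  have := ConcreteCategory.congr_hom (X.δ_comp_σ_of_le (i := (0 : Fin 3)) (j := (1 : Fin 2)) (by decide)) b
  simpa using this

lemma aux_d0s1' (b : X _⦋2⦌) :
    X.δ (0 : Fin 4) (X.σ (1 : Fin 3) b) = X.σ (0 : Fin 2) (X.δ (0 : Fin 3) b) := by
  have := ConcreteCategory.congr_hom (X.δ_comp_σ_of_le (i := (0 : Fin 3)) (j := (0 : Fin 2)) (by decide)) b
  simpa using this

lemma aux_s1s0 (c : X _⦋0⦌) :
    X.σ (1 : Fin 2) (X.σ (0 : Fin 1) c) = X.σ (0 : Fin 2) (X.σ (0 : Fin 1) c) := by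
  have := ConcreteCategory.congr_hom (X.σ_comp_σ (i := (0 : Fin 1)) (j := (0 : Fin 1)) le_rfl) c
  simpa using this.symm

lemma aux_d1s0 (c : X _⦋0⦌) : X.δ (1 : Fin 2) (X.σ (0 : Fin 1) c) = c := by
  have := ConcreteCategory.congr_hom (X.δ_comp_σ_succ (i := (0 : Fin 1))) c
  simpa using this

lemma aux_d1s0' (x : X _⦋1⦌) : X.δ (1 : Fin 3) (X.σ (0 : Fin 2) x) = x := by
  have := ConcreteCategory.congr_hom (X.δ_comp_σ_succ (i := (0 : Fin 2))) x
  simpa using this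

lemma aux_d3s2 (b : X _⦋2⦌) : X.δ (3 : Fin 4) (X.σ (2 : Fin 3) b) = b := by
  have := ConcreteCategory.congr_hom (X.δ_comp_σ_succ (i := (2 : Fin 3))) b
  simpa using this

lemma aux_d3s1 (b : X _⦋2⦌) :
    X.δ (3 : Fin 4) (X.σ (1 : Fin 3) b) = X.σ (1 : Fin 2) (X.δ (2 : Fin 3) b) := by
  have := ConcreteCategory.congr_hom (X.δ_comp_σ_of_gt (i := (2 : Fin 3)) (j := (1 : Fin 2)) (by decide)) b
  simpa using this

lemma aux_d0d2 (b : X _⦋2⦌) :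
    X.δ (0 : Fin 2) (X.δ (2 : Fin 3) b) = X.δ (1 : Fin 2) (X.δ (0 : Fin 3) b) := by
  have := ConcreteCategory.congr_hom (X.δ_comp_δ (i := (0 : Fin 2)) (j := (1 : Fin 2)) (by decide)) b
  simpa using this

end Aux

/-- If `X` is upper 2-Segal, then the square with top `s_1 : X_1 → X_2`,
left `d_0 : X_1 → X_0`, right `d_0 : X_2 → X_1`, bottom `s_0 : X_0 → X_1` is a pullback. -/
theorem upperTwoSegal_bottom_degeneracy_square (X : SSet.{u}) (h : UpperTwoSegal X) :
    IsPullbackSet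
      (fun x => X.σ (1 : Fin 2) x)
      (fun x => X.δ (0 : Fin 2) x)
      (fun x => X.δ (0 : Fin 3) x)
      (fun x => X.σ (0 : Fin 1) x) := by
  obtain ⟨-, hpb⟩ := h 0 1 one_pos (by omega)
  refine ⟨fun a => aux_comm X a, fun b c hbc => ?_⟩
  have hbc' : X.δ (0 : Fin 3) b = X.σ (0 : Fin 1) c := hbc
  -- key: s₁ (d₂ b) = b
  have hcomp : X.δ (0 : Fin 3) b = X.δ (1 : Fin 3) (X.σ (0 : Fin 2) (X.δ (0 : Fin 3) b)) :=
    (aux_d1s0' X _).symm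
  obtain ⟨y, -, hyuniq⟩ := hpb b (X.σ (0 : Fin 2) (X.δ (0 : Fin 3) b)) hcomp
  have h2 : X.σ (2 : Fin 3) b = X.σ (1 : Fin 3) b := by
    have e1 : X.δ (2 : Fin 4) (X.σ (2 : Fin 3) b) = b ∧
        X.δ (0 : Fin 4) (X.σ (2 : Fin 3) b) = X.σ (0 : Fin 2) (X.δ (0 : Fin 3) b) := by
      refine ⟨aux_d2s2 X b, ?_⟩
      rw [aux_d0s2 X b, hbc', aux_s1s0 X c, ← hbc']
    have e2 : X.δ (2 : Fin 4) (X.σ (1 : Fin 3) b) = b ∧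
        X.δ (0 : Fin 4) (X.σ (1 : Fin 3) b) = X.σ (0 : Fin 2) (X.δ (0 : Fin 3) b) :=
      ⟨aux_d2s1' X b, aux_d0s1' X b⟩
    rw [hyuniq _ e1, hyuniq _ e2]
  have hkey : X.σ (1 : Fin 2) (X.δ (2 : Fin 3) b) = b := by
    rw [← aux_d3s1 X b, ← h2, aux_d3s2 X b]
  refine ⟨X.δ (2 : Fin 3) b, ⟨hkey, ?_⟩, ?_⟩
  · show X.δ (0 : Fin 2) (X.δ (2 : Fin 3) b) = c
    rw [aux_d0d2 X b, hbc', aux_d1s0 X c]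
  · rintro a ⟨ha1, -⟩
    have ha1' : X.σ (1 : Fin 2) a = b := ha1
    have := aux_d2s1 X a
    rw [ha1'] at this
    exact this.symm
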